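/- If there is a wellformed derivation of the sequent Γ ⊢ Δ (where Γ and Δ are finite sets of first-order formulae), then there exists a formula C such that Γ ⊢ C and C ⊢ Δ are both derivable, every predicate occurring positively in C occurs positively in some formula of Γ and positively in some formula of Δ, and every predicate occurring negatively in C occurs negatively in some formula of Γ and negatively in some formula of Δ. -/

import Mathlib

namespace Craig

abbrev var : Type := Nat
abbrev tm : Type := var
abbrev pred : Type := Nat

inductive form : Type
  | P : pred → List tm → form
  | Bot : form
  | Top : form
  | And : form → form → form
  | Or : form → form → form
  | Not : form → form
  | FAll : form → form
  | FEx : form → form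
  deriving DecidableEq

def liftSub (s : var → tm) : var → tm
  | 0 => 0
  | n + 1 => (s n) + 1

def fsubst (s : var → tm) : form → form
  | .P i tms => .P i (tms.map s)
  | .Bot => .Bot
  | .Top => .Top
  | .And A B => .And (fsubst s A) (fsubst s B)
  | .Or A B => .Or (fsubst s A) (fsubst s B)
  | .Not A => .Not (fsubst s A)
  | .FAll A => .FAll (fsubst (liftSub s) A)
  | .FEx A => .FEx (fsubst (liftSub s) A)

def preSuc : List Nat → List Nat
  | [] => []
  | 0 :: l => preSuc l
  | (n + 1) :: l => n :: preSuc l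

def fv : form → List var
  | .P _ tms => tms
  | .Bot => []
  | .Top => []
  | .And A B => fv A ++ fv B
  | .Or A B => fv A ++ fv B
  | .Not A => fv A
  | .FAll A => preSuc (fv A)
  | .FEx A => preSuc (fv A)

def posneg : form → Set pred × Set pred
  | .P i _ => ({i}, ∅)
  | .Bot => (∅, ∅)
  | .Top => (∅, ∅)
  | .And A B => ((posneg A).1 ∪ (posneg B).1, (posneg A).2 ∪ (posneg B).2)
  | .Or A B => ((posneg A).1 ∪ (posneg B).1, (posneg A).2 ∪ (posneg B).2)
  | .Not A => ((posneg A).2, (posneg A).1)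
  | .FAll A => posneg A
  | .FEx A => posneg A

def pos (A : form) : Set pred := (posneg A).1
def neg (A : form) : Set pred := (posneg A).2

def fAll (a : var) (A : form) : form :=
  .FAll (fsubst (fun v => if v = a then 0 else v + 1) A)
def fEx (a : var) (A : form) : form :=
  .FEx (fsubst (fun v => if v = a then 0 else v + 1) A)

def FAll_inst (t : tm) : form → form
  | .FAll A => fsubst (fun v => match v with | 0 => t | n + 1 => n) A
  | A => A

def FEx_inst (t : tm) : form → form
  | .FEx A => fsubst (fun v => match v with | 0 => t | n + 1 => n) A
  | A => A

abbrev Seq : Type := Set form × Set form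

def fvs (S : Set form) : Set var := ⋃ A ∈ S, {v | v ∈ fv A}

inductive Deriv : Type
  | Init : Seq → Deriv
  | BotL : Seq → Deriv
  | TopR : Seq → Deriv
  | AndL : Seq → Deriv → Deriv
  | AndR : Seq → Deriv → Deriv → Deriv
  | OrL : Seq → Deriv → Deriv → Deriv
  | OrR : Seq → Deriv → Deriv
  | NotL : Seq → Deriv → Deriv
  | NotR : Seq → Deriv → Deriv
  | AllL : Seq → Deriv → Deriv
  | AllR : Seq → Deriv → Deriv
  | ExL : Seq → Deriv → Deriv
  | ExR : Seq → Deriv → Deriv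
  | WL : Seq → Deriv → Deriv
  | WR : Seq → Deriv → Deriv

def root : Deriv → Seq
  | .Init s => s
  | .BotL s => s
  | .TopR s => s
  | .AndL s _ => s
  | .AndR s _ _ => s
  | .OrL s _ _ => s
  | .OrR s _ => s
  | .NotL s _ => s
  | .NotR s _ => s
  | .AllL s _ => s
  | .AllR s _ => s
  | .ExL s _ => s
  | .ExR s _ => s
  | .WL s _ => s
  | .WR s _ => s

def is_deriv : Deriv → Prop
  | .Init s => s.1.Finite ∧ s.2.Finite ∧ ∃ A, A ∈ s.1 ∧ A ∈ s.2
  | .BotL s => s.1.Finite ∧ s.2.Finite ∧ form.Bot ∈ s.1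
  | .TopR s => s.1.Finite ∧ s.2.Finite ∧ form.Top ∈ s.2
  | .AndL s d => s.1.Finite ∧ s.2.Finite ∧
      ∃ A B, form.And A B ∈ s.1 ∧ is_deriv d ∧ root d = ({A, B} ∪ s.1, s.2)
  | .AndR s dl dr => s.1.Finite ∧ s.2.Finite ∧
      ∃ A B, form.And A B ∈ s.2 ∧ is_deriv dl ∧ root dl = (s.1, s.2 ∪ {A}) ∧
        is_deriv dr ∧ root dr = (s.1, s.2 ∪ {B})
  | .OrL s dl dr => s.1.Finite ∧ s.2.Finite ∧
      ∃ A B, form.Or A B ∈ s.1 ∧ is_deriv dl ∧ root dl = ({A} ∪ s.1, s.2) ∧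
        is_deriv dr ∧ root dr = ({B} ∪ s.1, s.2)
  | .OrR s d => s.1.Finite ∧ s.2.Finite ∧
      ∃ A B, form.Or A B ∈ s.2 ∧ is_deriv d ∧ root d = (s.1, s.2 ∪ {A, B})
  | .NotL s d => s.1.Finite ∧ s.2.Finite ∧
      ∃ C, form.Not C ∈ s.1 ∧ is_deriv d ∧ root d = (s.1, s.2 ∪ {C})
  | .NotR s d => s.1.Finite ∧ s.2.Finite ∧
      ∃ C, form.Not C ∈ s.2 ∧ is_deriv d ∧ root d = ({C} ∪ s.1, s.2)
  | .AllL s d => s.1.Finite ∧ s.2.Finite ∧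
      ∃ A a t, fAll a A ∈ s.1 ∧ is_deriv d ∧
        root d = ({FAll_inst t (fAll a A)} ∪ s.1, s.2)
  | .AllR s d => s.1.Finite ∧ s.2.Finite ∧
      ∃ a A, fAll a A ∈ s.2 ∧ a ∉ fvs (s.1 ∪ s.2) ∧ is_deriv d ∧
        root d = (s.1, s.2 ∪ {A})
  | .ExL s d => s.1.Finite ∧ s.2.Finite ∧
      ∃ a A, fEx a A ∈ s.1 ∧ a ∉ fvs (s.1 ∪ s.2) ∧ is_deriv d ∧
        root d = ({A} ∪ s.1, s.2)
  | .ExR s d => s.1.Finite ∧ s.2.Finite ∧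
      ∃ A a t, fEx a A ∈ s.2 ∧ is_deriv d ∧
        root d = (s.1, s.2 ∪ {FEx_inst t (fEx a A)})
  | .WL s d => ∃ Γ Δ A, Γ.Finite ∧ Δ.Finite ∧ is_deriv d ∧ root d = (Γ, Δ) ∧
      s = ({A} ∪ Γ, Δ)
  | .WR s d => ∃ Γ Δ A, Γ.Finite ∧ Δ.Finite ∧ is_deriv d ∧ root d = (Γ, Δ) ∧
      s = (Γ, Δ ∪ {A})

def derivable (s : Seq) : Prop := ∃ d, is_deriv d ∧ root d = s

/-! ### Substitution lemmas -/

lemma liftSub_id : liftSub (fun v => v) = fun v => v := by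
  funext v; cases v <;> rfl

lemma fsubst_id (A : form) : fsubst (fun v => v) A = A := by
  induction A <;> simp_all [fsubst, liftSub_id]

lemma liftSub_comp (s r : var → tm) :
    liftSub (fun v => s (r v)) = fun v => liftSub s (liftSub r v) := by
  funext v; cases v <;> rfl

lemma fsubst_fsubst (s r : var → tm) (A : form) :
    fsubst s (fsubst r A) = fsubst (fun v => s (r v)) A := by
  induction A generalizing s r <;> simp_all [fsubst, liftSub_comp]

lemma FAll_inst_fAll (a : var) (A : form) : FAll_inst a (fAll a A) = A := by
  simp only [fAll, FAll_inst, fsubst_fsubst]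
  have h : (fun v => (fun v => match v with | 0 => a | (n+1) => n)
      ((fun v => if v = a then 0 else v + 1) v)) = fun v : var => v := by
    funext v; by_cases h : v = a <;> simp [h]
  rw [h, fsubst_id]

lemma FEx_inst_fEx (a : var) (A : form) : FEx_inst a (fEx a A) = A := by
  simp only [fEx, FEx_inst, fsubst_fsubst]
  have h : (fun v => (fun v => match v with | 0 => a | (n+1) => n)
      ((fun v => if v = a then 0 else v + 1) v)) = fun v : var => v := by
    funext v; by_cases h : v = a <;> simp [h]
  rw [h, fsubst_id]

/-! ### Polarity lemmas -/

lemma posneg_fsubst (s : var → tm) (A : form) : posneg (fsubst s A) = posneg A := by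
  induction A generalizing s <;> simp_all [fsubst, posneg]

lemma pos_and (A B : form) : pos (.And A B) = pos A ∪ pos B := rfl
lemma neg_and (A B : form) : neg (.And A B) = neg A ∪ neg B := rfl
lemma pos_or (A B : form) : pos (.Or A B) = pos A ∪ pos B := rfl
lemma neg_or (A B : form) : neg (.Or A B) = neg A ∪ neg B := rfl
lemma pos_not (A : form) : pos (.Not A) = neg A := rfl
lemma neg_not (A : form) : neg (.Not A) = pos A := rfl
lemma pos_bot : pos .Bot = ∅ := rfl
lemma neg_bot : neg .Bot = ∅ := rfl
lemma pos_top : pos .Top = ∅ := rfl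
lemma neg_top : neg .Top = ∅ := rfl

lemma pos_fAll (a : var) (A : form) : pos (fAll a A) = pos A := by
  simp [fAll, pos, posneg, posneg_fsubst]
lemma neg_fAll (a : var) (A : form) : neg (fAll a A) = neg A := by
  simp [fAll, neg, posneg, posneg_fsubst]
lemma pos_fEx (a : var) (A : form) : pos (fEx a A) = pos A := by
  simp [fEx, pos, posneg, posneg_fsubst]
lemma neg_fEx (a : var) (A : form) : neg (fEx a A) = neg A := by
  simp [fEx, neg, posneg, posneg_fsubst]

lemma pos_FAll_inst (t : tm) (a : var) (A : form) :
    pos (FAll_inst t (fAll a A)) = pos (fAll a A) := by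
  simp [fAll, FAll_inst, pos, posneg, posneg_fsubst]
lemma neg_FAll_inst (t : tm) (a : var) (A : form) :
    neg (FAll_inst t (fAll a A)) = neg (fAll a A) := by
  simp [fAll, FAll_inst, neg, posneg, posneg_fsubst]
lemma pos_FEx_inst (t : tm) (a : var) (A : form) :
    pos (FEx_inst t (fEx a A)) = pos (fEx a A) := by
  simp [fEx, FEx_inst, pos, posneg, posneg_fsubst]
lemma neg_FEx_inst (t : tm) (a : var) (A : form) :
    neg (FEx_inst t (fEx a A)) = neg (fEx a A) := by
  simp [fEx, FEx_inst, neg, posneg, posneg_fsubst]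

/-! ### Free variable lemmas -/

lemma mem_preSuc (n : Nat) (l : List Nat) : n ∈ preSuc l ↔ n + 1 ∈ l := by
  induction l with
  | nil => simp [preSuc]
  | cons h t ih => cases h <;> simp [preSuc, ih]

lemma preSuc_map_lift (s : var → tm) (l : List Nat) :
    preSuc (l.map (liftSub s)) = (preSuc l).map s := by
  induction l with
  | nil => rfl
  | cons h t ih => cases h <;> simp [preSuc, liftSub, ih]

lemma fv_fsubst (s : var → tm) (A : form) : fv (fsubst s A) = (fv A).map s := by
  induction A generalizing s <;> simp_all [fsubst, fv, preSuc_map_lift]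

lemma not_mem_preSuc_map (a : var) (l : List Nat) :
    a ∉ preSuc (l.map fun v => if v = a then 0 else v + 1) := by
  rw [mem_preSuc]
  simp only [List.mem_map, not_exists]
  intro v
  rintro ⟨hv, he⟩
  by_cases h : v = a <;> simp [h] at he

lemma not_mem_fv_fAll (a : var) (A : form) : a ∉ fv (fAll a A) := by
  simp only [fAll, fv, fv_fsubst]
  exact not_mem_preSuc_map a _

lemma not_mem_fv_fEx (a : var) (A : form) : a ∉ fv (fEx a A) := by
  simp only [fEx, fv, fv_fsubst]
  exact not_mem_preSuc_map a _

lemma mem_fvs {v : var} {S : Set form} : v ∈ fvs S ↔ ∃ A ∈ S, v ∈ fv A := by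
  simp [fvs]

lemma fvs_union (X Y : Set form) : fvs (X ∪ Y) = fvs X ∪ fvs Y :=
  Set.biUnion_union X Y _

lemma fvs_singleton (A : form) : fvs {A} = {v | v ∈ fv A} := by
  simp [fvs]

/-! ### Derivability helpers -/

lemma root_fin (d : Deriv) (h : is_deriv d) : (root d).1.Finite ∧ (root d).2.Finite := by
  cases d with
  | WL s d =>
      obtain ⟨Γ, Δ, A, f1, f2, _, _, hs⟩ := h
      rw [root, hs]
      exact ⟨(Set.finite_singleton A).union f1, f2⟩
  | WR s d =>
      obtain ⟨Γ, Δ, A, f1, f2, _, _, hs⟩ := h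
      rw [root, hs]
      exact ⟨f1, f2.union (Set.finite_singleton A)⟩
  | _ => exact ⟨h.1, h.2.1⟩

lemma derivable_fin {Γ Δ : Set form} (h : derivable (Γ, Δ)) : Γ.Finite ∧ Δ.Finite := by
  obtain ⟨d, hd, hr⟩ := h
  have := root_fin d hd
  rw [hr] at this
  exact this

lemma d_init {Γ Δ : Set form} {A : form} (h1 : A ∈ Γ) (h2 : A ∈ Δ)
    (f1 : Γ.Finite) (f2 : Δ.Finite) : derivable (Γ, Δ) :=
  ⟨.Init (Γ, Δ), ⟨f1, f2, A, h1, h2⟩, rfl⟩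

lemma d_botL {Γ Δ : Set form} (h : form.Bot ∈ Γ) (f1 : Γ.Finite) (f2 : Δ.Finite) :
    derivable (Γ, Δ) := ⟨.BotL (Γ, Δ), ⟨f1, f2, h⟩, rfl⟩

lemma d_topR {Γ Δ : Set form} (h : form.Top ∈ Δ) (f1 : Γ.Finite) (f2 : Δ.Finite) :
    derivable (Γ, Δ) := ⟨.TopR (Γ, Δ), ⟨f1, f2, h⟩, rfl⟩

lemma d_andL {Γ Δ : Set form} {A B : form} (h : form.And A B ∈ Γ)
    (hp : derivable ({A, B} ∪ Γ, Δ)) : derivable (Γ, Δ) := by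
  obtain ⟨d, hd, hr⟩ := hp
  have f := derivable_fin ⟨d, hd, hr⟩
  exact ⟨.AndL (Γ, Δ) d, ⟨f.1.subset Set.subset_union_right, f.2, A, B, h, hd, hr⟩, rfl⟩

lemma d_andR {Γ Δ : Set form} {A B : form} (h : form.And A B ∈ Δ)
    (h1 : derivable (Γ, Δ ∪ {A})) (h2 : derivable (Γ, Δ ∪ {B})) : derivable (Γ, Δ) := by
  obtain ⟨d1, hd1, hr1⟩ := h1
  obtain ⟨d2, hd2, hr2⟩ := h2
  have f := derivable_fin ⟨d1, hd1, hr1⟩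
  exact ⟨.AndR (Γ, Δ) d1 d2,
    ⟨f.1, f.2.subset Set.subset_union_left, A, B, h, hd1, hr1, hd2, hr2⟩, rfl⟩

lemma d_orL {Γ Δ : Set form} {A B : form} (h : form.Or A B ∈ Γ)
    (h1 : derivable ({A} ∪ Γ, Δ)) (h2 : derivable ({B} ∪ Γ, Δ)) : derivable (Γ, Δ) := by
  obtain ⟨d1, hd1, hr1⟩ := h1
  obtain ⟨d2, hd2, hr2⟩ := h2
  have f := derivable_fin ⟨d1, hd1, hr1⟩
  exact ⟨.OrL (Γ, Δ) d1 d2,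
    ⟨f.1.subset Set.subset_union_right, f.2, A, B, h, hd1, hr1, hd2, hr2⟩, rfl⟩

lemma d_orR {Γ Δ : Set form} {A B : form} (h : form.Or A B ∈ Δ)
    (hp : derivable (Γ, Δ ∪ {A, B})) : derivable (Γ, Δ) := by
  obtain ⟨d, hd, hr⟩ := hp
  have f := derivable_fin ⟨d, hd, hr⟩
  exact ⟨.OrR (Γ, Δ) d, ⟨f.1, f.2.subset Set.subset_union_left, A, B, h, hd, hr⟩, rfl⟩

lemma d_notL {Γ Δ : Set form} {A : form} (h : form.Not A ∈ Γ)
    (hp : derivable (Γ, Δ ∪ {A})) : derivable (Γ, Δ) := by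
  obtain ⟨d, hd, hr⟩ := hp
  have f := derivable_fin ⟨d, hd, hr⟩
  exact ⟨.NotL (Γ, Δ) d, ⟨f.1, f.2.subset Set.subset_union_left, A, h, hd, hr⟩, rfl⟩

lemma d_notR {Γ Δ : Set form} {A : form} (h : form.Not A ∈ Δ)
    (hp : derivable ({A} ∪ Γ, Δ)) : derivable (Γ, Δ) := by
  obtain ⟨d, hd, hr⟩ := hp
  have f := derivable_fin ⟨d, hd, hr⟩
  exact ⟨.NotR (Γ, Δ) d, ⟨f.1.subset Set.subset_union_right, f.2, A, h, hd, hr⟩, rfl⟩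

lemma d_allL {Γ Δ : Set form} {A : form} {a : var} (t : tm) (h : fAll a A ∈ Γ)
    (hp : derivable ({FAll_inst t (fAll a A)} ∪ Γ, Δ)) : derivable (Γ, Δ) := by
  obtain ⟨d, hd, hr⟩ := hp
  have f := derivable_fin ⟨d, hd, hr⟩
  exact ⟨.AllL (Γ, Δ) d, ⟨f.1.subset Set.subset_union_right, f.2, A, a, t, h, hd, hr⟩, rfl⟩

lemma d_allR {Γ Δ : Set form} {A : form} {a : var} (h : fAll a A ∈ Δ)
    (hfv : a ∉ fvs (Γ ∪ Δ)) (hp : derivable (Γ, Δ ∪ {A})) : derivable (Γ, Δ) := by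
  obtain ⟨d, hd, hr⟩ := hp
  have f := derivable_fin ⟨d, hd, hr⟩
  exact ⟨.AllR (Γ, Δ) d, ⟨f.1, f.2.subset Set.subset_union_left, a, A, h, hfv, hd, hr⟩, rfl⟩

lemma d_exL {Γ Δ : Set form} {A : form} {a : var} (h : fEx a A ∈ Γ)
    (hfv : a ∉ fvs (Γ ∪ Δ)) (hp : derivable ({A} ∪ Γ, Δ)) : derivable (Γ, Δ) := by
  obtain ⟨d, hd, hr⟩ := hp
  have f := derivable_fin ⟨d, hd, hr⟩
  exact ⟨.ExL (Γ, Δ) d, ⟨f.1.subset Set.subset_union_right, f.2, a, A, h, hfv, hd, hr⟩, rfl⟩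

lemma d_exR {Γ Δ : Set form} {A : form} {a : var} (t : tm) (h : fEx a A ∈ Δ)
    (hp : derivable (Γ, Δ ∪ {FEx_inst t (fEx a A)})) : derivable (Γ, Δ) := by
  obtain ⟨d, hd, hr⟩ := hp
  have f := derivable_fin ⟨d, hd, hr⟩
  exact ⟨.ExR (Γ, Δ) d, ⟨f.1, f.2.subset Set.subset_union_left, A, a, t, h, hd, hr⟩, rfl⟩

lemma d_wl {Γ Δ : Set form} (A : form) (hp : derivable (Γ, Δ)) : derivable ({A} ∪ Γ, Δ) := by
  obtain ⟨d, hd, hr⟩ := hp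
  have f := derivable_fin ⟨d, hd, hr⟩
  exact ⟨.WL ({A} ∪ Γ, Δ) d, ⟨Γ, Δ, A, f.1, f.2, hd, hr, rfl⟩, rfl⟩

lemma d_wr {Γ Δ : Set form} (A : form) (hp : derivable (Γ, Δ)) : derivable (Γ, Δ ∪ {A}) := by
  obtain ⟨d, hd, hr⟩ := hp
  have f := derivable_fin ⟨d, hd, hr⟩
  exact ⟨.WR (Γ, Δ ∪ {A}) d, ⟨Γ, Δ, A, f.1, f.2, hd, hr, rfl⟩, rfl⟩

lemma d_weaken {Γ Δ Γ' Δ' : Set form} (h : derivable (Γ, Δ)) (h1 : Γ ⊆ Γ') (h2 : Δ ⊆ Δ')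
    (f1 : Γ'.Finite) (f2 : Δ'.Finite) : derivable (Γ', Δ') := by
  have left : ∀ S : Set form, S.Finite → derivable (S ∪ Γ, Δ) := by
    intro S hS
    refine Set.Finite.induction_on (motive := fun S _ => derivable (S ∪ Γ, Δ)) S hS ?_ ?_
    · simpa using h
    · intro a S _ _ ih
      rw [Set.insert_union, Set.insert_eq]
      exact d_wl _ ih
  have hG : derivable (Γ', Δ) := by
    have := left (Γ' \ Γ) f1.diff
    rwa [Set.diff_union_of_subset h1] at this
  have right : ∀ S : Set form, S.Finite → derivable (Γ', Δ ∪ S) := by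
    intro S hS
    refine Set.Finite.induction_on (motive := fun S _ => derivable (Γ', Δ ∪ S)) S hS ?_ ?_
    · simpa using hG
    · intro a S _ _ ih
      rw [Set.union_insert, ← Set.union_singleton]
      exact d_wr _ ih
  have := right (Δ' \ Δ) f2.diff
  rwa [Set.union_diff_cancel h2] at this

/-! ### Positive/negative predicate sets -/

def PS (X : Set form) : Set pred := ⋃ A ∈ X, pos A
def NS (X : Set form) : Set pred := ⋃ A ∈ X, neg A

lemma mem_PS {p : pred} {X : Set form} : p ∈ PS X ↔ ∃ A ∈ X, p ∈ pos A := by simp [PS]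
lemma mem_NS {p : pred} {X : Set form} : p ∈ NS X ↔ ∃ A ∈ X, p ∈ neg A := by simp [NS]

lemma pos_sub_PS {A : form} {X : Set form} (h : A ∈ X) : pos A ⊆ PS X :=
  fun p hp => mem_PS.2 ⟨A, h, hp⟩
lemma neg_sub_NS {A : form} {X : Set form} (h : A ∈ X) : neg A ⊆ NS X :=
  fun p hp => mem_NS.2 ⟨A, h, hp⟩

lemma PS_union (X Y : Set form) : PS (X ∪ Y) = PS X ∪ PS Y :=
  Set.biUnion_union X Y _
lemma NS_union (X Y : Set form) : NS (X ∪ Y) = NS X ∪ NS Y :=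
  Set.biUnion_union X Y _
lemma PS_singleton (A : form) : PS {A} = pos A := by simp [PS]
lemma NS_singleton (A : form) : NS {A} = neg A := by simp [NS]
lemma PS_pair (A B : form) : PS {A, B} = pos A ∪ pos B := by simp [PS]
lemma NS_pair (A B : form) : NS {A, B} = neg A ∪ neg B := by simp [NS]
lemma PS_empty : PS ∅ = ∅ := by simp [PS]
lemma NS_empty : NS ∅ = ∅ := by simp [NS]

lemma PS_mono {X Y : Set form} (h : X ⊆ Y) : PS X ⊆ PS Y := by
  intro p hp; rw [mem_PS] at *; obtain ⟨A, hA, hpA⟩ := hp; exact ⟨A, h hA, hpA⟩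
lemma NS_mono {X Y : Set form} (h : X ⊆ Y) : NS X ⊆ NS Y := by
  intro p hp; rw [mem_NS] at *; obtain ⟨A, hA, hpA⟩ := hp; exact ⟨A, h hA, hpA⟩
/-! ### Adjustment lemmas for polarity bookkeeping -/

lemma adj_mid {C X Y Z E : Set pred} (h : C ⊆ (X ∪ (Y ∪ E)) ∩ Z) (hE : E ⊆ X ∪ Y) :
    C ⊆ (X ∪ Y) ∩ Z := by
  intro p hp
  have h1 := h hp
  have h2 := fun hh : p ∈ E => hE hh
  simp only [Set.mem_inter_iff, Set.mem_union] at *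
  tauto

lemma adj_left {C X Y Z E : Set pred} (h : C ⊆ ((E ∪ X) ∪ Y) ∩ Z) (hE : E ⊆ X ∪ Y) :
    C ⊆ (X ∪ Y) ∩ Z := by
  intro p hp
  have h1 := h hp
  have h2 := fun hh : p ∈ E => hE hh
  simp only [Set.mem_inter_iff, Set.mem_union] at *
  tauto

lemma adj_mid' {C X Y Z E : Set pred} (h : C ⊆ Z ∩ (X ∪ (Y ∪ E))) (hE : E ⊆ X ∪ Y) :
    C ⊆ Z ∩ (X ∪ Y) := by
  intro p hp
  have h1 := h hp
  have h2 := fun hh : p ∈ E => hE hh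
  simp only [Set.mem_inter_iff, Set.mem_union] at *
  tauto

lemma adj_left' {C X Y Z E : Set pred} (h : C ⊆ Z ∩ ((E ∪ X) ∪ Y)) (hE : E ⊆ X ∪ Y) :
    C ⊆ Z ∩ (X ∪ Y) := by
  intro p hp
  have h1 := h hp
  have h2 := fun hh : p ∈ E => hE hh
  simp only [Set.mem_inter_iff, Set.mem_union] at *
  tauto

/-! ### The main interpolation lemma (Maehara's method) -/

lemma interpolate (d : Deriv) : is_deriv d → ∀ Γ₁ Γ₂ Δ₁ Δ₂ : Set form,
    root d = (Γ₁ ∪ Γ₂, Δ₁ ∪ Δ₂) →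
    ∃ C, derivable (Γ₁, Δ₁ ∪ {C}) ∧ derivable ({C} ∪ Γ₂, Δ₂) ∧
      pos C ⊆ (PS Γ₁ ∪ NS Δ₁) ∩ (NS Γ₂ ∪ PS Δ₂) ∧
      neg C ⊆ (NS Γ₁ ∪ PS Δ₁) ∩ (PS Γ₂ ∪ NS Δ₂) := by
  induction d with
  | Init s =>
    intro h Γ₁ Γ₂ Δ₁ Δ₂ hr
    simp only [root] at hr; subst hr
    obtain ⟨h1, h2, A, hA1, hA2⟩ := h
    have fΓ₁ := h1.subset Set.subset_union_left
    have fΓ₂ := h1.subset Set.subset_union_right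
    have fΔ₁ := h2.subset Set.subset_union_left
    have fΔ₂ := h2.subset Set.subset_union_right
    rw [Set.mem_union] at hA1 hA2
    rcases hA1 with hG | hG <;> rcases hA2 with hD | hD
    · -- A ∈ Γ₁, A ∈ Δ₁ : interpolant ⊥
      refine ⟨.Bot, ?_, ?_, ?_, ?_⟩
      · exact d_init (A := A) hG (Set.mem_union_left _ hD) fΓ₁
          (fΔ₁.union (Set.finite_singleton _))
      · exact d_botL (Set.mem_union_left _ rfl) ((Set.finite_singleton _).union fΓ₂) fΔ₂
      · rw [pos_bot]; exact Set.empty_subset _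
      · rw [neg_bot]; exact Set.empty_subset _
    · -- A ∈ Γ₁, A ∈ Δ₂ : interpolant A
      refine ⟨A, ?_, ?_, ?_, ?_⟩
      · exact d_init (A := A) hG (Set.mem_union_right _ rfl) fΓ₁
          (fΔ₁.union (Set.finite_singleton _))
      · exact d_init (A := A) (Set.mem_union_left _ rfl) hD
          ((Set.finite_singleton _).union fΓ₂) fΔ₂
      · exact Set.subset_inter ((pos_sub_PS hG).trans Set.subset_union_left)
          ((pos_sub_PS hD).trans Set.subset_union_right)
      · exact Set.subset_inter ((neg_sub_NS hG).trans Set.subset_union_left)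
          ((neg_sub_NS hD).trans Set.subset_union_right)
    · -- A ∈ Γ₂, A ∈ Δ₁ : interpolant ¬A
      refine ⟨.Not A, ?_, ?_, ?_, ?_⟩
      · refine d_notR (Set.mem_union_right _ rfl) ?_
        exact d_init (A := A) (Set.mem_union_left _ rfl) (Set.mem_union_left _ hD)
          ((Set.finite_singleton _).union fΓ₁) (fΔ₁.union (Set.finite_singleton _))
      · refine d_notL (Set.mem_union_left _ rfl) ?_
        exact d_init (A := A) (Set.mem_union_right _ hG) (Set.mem_union_right _ rfl)
          ((Set.finite_singleton _).union fΓ₂) (fΔ₂.union (Set.finite_singleton _))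
      · rw [pos_not]
        exact Set.subset_inter ((neg_sub_NS hD).trans Set.subset_union_right)
          ((neg_sub_NS hG).trans Set.subset_union_left)
      · rw [neg_not]
        exact Set.subset_inter ((pos_sub_PS hD).trans Set.subset_union_right)
          ((pos_sub_PS hG).trans Set.subset_union_left)
    · -- A ∈ Γ₂, A ∈ Δ₂ : interpolant ⊤
      refine ⟨.Top, ?_, ?_, ?_, ?_⟩
      · exact d_topR (Set.mem_union_right _ rfl) fΓ₁ (fΔ₁.union (Set.finite_singleton _))
      · exact d_init (A := A) (Set.mem_union_right _ hG) hD
          ((Set.finite_singleton _).union fΓ₂) fΔ₂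
      · rw [pos_top]; exact Set.empty_subset _
      · rw [neg_top]; exact Set.empty_subset _
  | BotL s =>
    intro h Γ₁ Γ₂ Δ₁ Δ₂ hr
    simp only [root] at hr; subst hr
    obtain ⟨h1, h2, hB⟩ := h
    have fΓ₁ := h1.subset Set.subset_union_left
    have fΓ₂ := h1.subset Set.subset_union_right
    have fΔ₁ := h2.subset Set.subset_union_left
    have fΔ₂ := h2.subset Set.subset_union_right
    rw [Set.mem_union] at hB
    rcases hB with hB | hB
    · refine ⟨.Bot, ?_, ?_, ?_, ?_⟩
      · exact d_botL hB fΓ₁ (fΔ₁.union (Set.finite_singleton _))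
      · exact d_botL (Set.mem_union_left _ rfl) ((Set.finite_singleton _).union fΓ₂) fΔ₂
      · rw [pos_bot]; exact Set.empty_subset _
      · rw [neg_bot]; exact Set.empty_subset _
    · refine ⟨.Top, ?_, ?_, ?_, ?_⟩
      · exact d_topR (Set.mem_union_right _ rfl) fΓ₁ (fΔ₁.union (Set.finite_singleton _))
      · exact d_botL (Set.mem_union_right _ hB) ((Set.finite_singleton _).union fΓ₂) fΔ₂
      · rw [pos_top]; exact Set.empty_subset _
      · rw [neg_top]; exact Set.empty_subset _
  | TopR s =>
    intro h Γ₁ Γ₂ Δ₁ Δ₂ hr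
    simp only [root] at hr; subst hr
    obtain ⟨h1, h2, hT⟩ := h
    have fΓ₁ := h1.subset Set.subset_union_left
    have fΓ₂ := h1.subset Set.subset_union_right
    have fΔ₁ := h2.subset Set.subset_union_left
    have fΔ₂ := h2.subset Set.subset_union_right
    rw [Set.mem_union] at hT
    rcases hT with hT | hT
    · refine ⟨.Bot, ?_, ?_, ?_, ?_⟩
      · exact d_topR (Set.mem_union_left _ hT) fΓ₁ (fΔ₁.union (Set.finite_singleton _))
      · exact d_botL (Set.mem_union_left _ rfl) ((Set.finite_singleton _).union fΓ₂) fΔ₂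
      · rw [pos_bot]; exact Set.empty_subset _
      · rw [neg_bot]; exact Set.empty_subset _
    · refine ⟨.Top, ?_, ?_, ?_, ?_⟩
      · exact d_topR (Set.mem_union_right _ rfl) fΓ₁ (fΔ₁.union (Set.finite_singleton _))
      · exact d_topR hT ((Set.finite_singleton _).union fΓ₂) fΔ₂
      · rw [pos_top]; exact Set.empty_subset _
      · rw [neg_top]; exact Set.empty_subset _
  | AndL s d ih =>
    intro h Γ₁ Γ₂ Δ₁ Δ₂ hr
    simp only [root] at hr; subst hr
    obtain ⟨h1, h2, A, B, hAB, hd, hrd⟩ := h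
    have fΓ₁ := h1.subset Set.subset_union_left
    have fΓ₂ := h1.subset Set.subset_union_right
    have fΔ₁ := h2.subset Set.subset_union_left
    have fΔ₂ := h2.subset Set.subset_union_right
    rw [Set.mem_union] at hAB
    rcases hAB with hAB | hAB
    · obtain ⟨C, hL, hR, hpos, hneg⟩ := ih hd ({A, B} ∪ Γ₁) Γ₂ Δ₁ Δ₂
        (by rw [hrd, Set.union_assoc])
      refine ⟨C, d_andL hAB hL, hR, ?_, ?_⟩
      · simp only [PS_union, PS_pair] at hpos
        refine adj_left hpos ?_
        have hs : pos (form.And A B) ⊆ PS Γ₁ := pos_sub_PS hAB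
        rw [pos_and] at hs
        exact hs.trans Set.subset_union_left
      · simp only [NS_union, NS_pair] at hneg
        refine adj_left hneg ?_
        have hs : neg (form.And A B) ⊆ NS Γ₁ := neg_sub_NS hAB
        rw [neg_and] at hs
        exact hs.trans Set.subset_union_left
    · obtain ⟨C, hL, hR, hpos, hneg⟩ := ih hd Γ₁ ({A, B} ∪ Γ₂) Δ₁ Δ₂
        (by rw [hrd, Set.union_left_comm, ← Set.union_assoc, Set.union_comm Γ₁ {A,B},
          Set.union_assoc])
      refine ⟨C, hL, ?_, ?_, ?_⟩
      · refine d_andL (Set.mem_union_right _ hAB) ?_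
        refine d_weaken hR ?_ subset_rfl
          ((Set.Finite.union ((Set.finite_singleton _).insert _)
            ((Set.finite_singleton _).union fΓ₂))) fΔ₂
        intro x hx; simp only [Set.mem_union, Set.mem_insert_iff, Set.mem_singleton_iff] at hx ⊢; tauto
      · simp only [NS_union, NS_pair] at hpos
        refine adj_left' hpos ?_
        have hs : neg (form.And A B) ⊆ NS Γ₂ := neg_sub_NS hAB
        rw [neg_and] at hs
        exact hs.trans Set.subset_union_left
      · simp only [PS_union, PS_pair] at hneg
        refine adj_left' hneg ?_
        have hs : pos (form.And A B) ⊆ PS Γ₂ := pos_sub_PS hAB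
        rw [pos_and] at hs
        exact hs.trans Set.subset_union_left
  | AndR s dl dr ihl ihr =>
    intro h Γ₁ Γ₂ Δ₁ Δ₂ hr
    simp only [root] at hr; subst hr
    obtain ⟨h1, h2, A, B, hAB, hdl, hrl, hdr, hrr⟩ := h
    have fΓ₁ := h1.subset Set.subset_union_left
    have fΓ₂ := h1.subset Set.subset_union_right
    have fΔ₁ := h2.subset Set.subset_union_left
    have fΔ₂ := h2.subset Set.subset_union_right
    rw [Set.mem_union] at hAB
    rcases hAB with hAB | hAB
    · obtain ⟨C1, hL1, hR1, hpos1, hneg1⟩ := ihl hdl Γ₁ Γ₂ (Δ₁ ∪ {A}) Δ₂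
        (by rw [hrl, Set.union_right_comm])
      obtain ⟨C2, hL2, hR2, hpos2, hneg2⟩ := ihr hdr Γ₁ Γ₂ (Δ₁ ∪ {B}) Δ₂
        (by rw [hrr, Set.union_right_comm])
      refine ⟨.Or C1 C2, ?_, ?_, ?_, ?_⟩
      · refine d_andR (Set.mem_union_left _ hAB) ?_ ?_
        · refine d_orR (A := C1) (B := C2)
            (Set.mem_union_left _ (Set.mem_union_right _ rfl)) ?_
          refine d_weaken hL1 subset_rfl ?_ fΓ₁
            (((fΔ₁.union (Set.finite_singleton _)).union (Set.finite_singleton _)).union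
              ((Set.finite_singleton _).insert _))
          intro x hx; simp only [Set.mem_union, Set.mem_insert_iff, Set.mem_singleton_iff] at hx ⊢; tauto
        · refine d_orR (A := C1) (B := C2)
            (Set.mem_union_left _ (Set.mem_union_right _ rfl)) ?_
          refine d_weaken hL2 subset_rfl ?_ fΓ₁
            (((fΔ₁.union (Set.finite_singleton _)).union (Set.finite_singleton _)).union
              ((Set.finite_singleton _).insert _))
          intro x hx; simp only [Set.mem_union, Set.mem_insert_iff, Set.mem_singleton_iff] at hx ⊢; tauto
      · refine d_orL (Set.mem_union_left _ rfl) ?_ ?_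
        · refine d_weaken hR1 ?_ subset_rfl
            ((Set.finite_singleton _).union ((Set.finite_singleton _).union fΓ₂)) fΔ₂
          intro x hx; simp only [Set.mem_union, Set.mem_insert_iff, Set.mem_singleton_iff] at hx ⊢; tauto
        · refine d_weaken hR2 ?_ subset_rfl
            ((Set.finite_singleton _).union ((Set.finite_singleton _).union fΓ₂)) fΔ₂
          intro x hx; simp only [Set.mem_union, Set.mem_insert_iff, Set.mem_singleton_iff] at hx ⊢; tauto
      · rw [pos_or]
        simp only [NS_union, NS_singleton] at hpos1 hpos2
        have hsA : neg A ⊆ NS Δ₁ := fun p hp =>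
          neg_sub_NS hAB (by rw [neg_and]; exact Set.mem_union_left _ hp)
        have hsB : neg B ⊆ NS Δ₁ := fun p hp =>
          neg_sub_NS hAB (by rw [neg_and]; exact Set.mem_union_right _ hp)
        exact Set.union_subset (adj_mid hpos1 (hsA.trans Set.subset_union_right))
          (adj_mid hpos2 (hsB.trans Set.subset_union_right))
      · rw [neg_or]
        simp only [PS_union, PS_singleton] at hneg1 hneg2
        have hsA : pos A ⊆ PS Δ₁ := fun p hp =>
          pos_sub_PS hAB (by rw [pos_and]; exact Set.mem_union_left _ hp)
        have hsB : pos B ⊆ PS Δ₁ := fun p hp =>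
          pos_sub_PS hAB (by rw [pos_and]; exact Set.mem_union_right _ hp)
        exact Set.union_subset (adj_mid hneg1 (hsA.trans Set.subset_union_right))
          (adj_mid hneg2 (hsB.trans Set.subset_union_right))
    · obtain ⟨C1, hL1, hR1, hpos1, hneg1⟩ := ihl hdl Γ₁ Γ₂ Δ₁ (Δ₂ ∪ {A})
        (by rw [hrl, Set.union_assoc])
      obtain ⟨C2, hL2, hR2, hpos2, hneg2⟩ := ihr hdr Γ₁ Γ₂ Δ₁ (Δ₂ ∪ {B})
        (by rw [hrr, Set.union_assoc])
      refine ⟨.And C1 C2, ?_, ?_, ?_, ?_⟩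
      · refine d_andR (A := C1) (B := C2) (Set.mem_union_right _ rfl) ?_ ?_
        · refine d_weaken hL1 subset_rfl ?_ fΓ₁
            ((fΔ₁.union (Set.finite_singleton _)).union (Set.finite_singleton _))
          intro x hx; simp only [Set.mem_union, Set.mem_insert_iff, Set.mem_singleton_iff] at hx ⊢; tauto
        · refine d_weaken hL2 subset_rfl ?_ fΓ₁
            ((fΔ₁.union (Set.finite_singleton _)).union (Set.finite_singleton _))
          intro x hx; simp only [Set.mem_union, Set.mem_insert_iff, Set.mem_singleton_iff] at hx ⊢; tauto
      · refine d_andR hAB ?_ ?_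
        · refine d_andL (A := C1) (B := C2) (Set.mem_union_left _ rfl) ?_
          refine d_weaken hR1 ?_ subset_rfl
            (((Set.finite_singleton _).insert _).union
              ((Set.finite_singleton _).union fΓ₂)) (fΔ₂.union (Set.finite_singleton _))
          intro x hx; simp only [Set.mem_union, Set.mem_insert_iff, Set.mem_singleton_iff] at hx ⊢; tauto
        · refine d_andL (A := C1) (B := C2) (Set.mem_union_left _ rfl) ?_
          refine d_weaken hR2 ?_ subset_rfl
            (((Set.finite_singleton _).insert _).union
              ((Set.finite_singleton _).union fΓ₂)) (fΔ₂.union (Set.finite_singleton _))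
          intro x hx; simp only [Set.mem_union, Set.mem_insert_iff, Set.mem_singleton_iff] at hx ⊢; tauto
      · rw [pos_and]
        simp only [PS_union, PS_singleton] at hpos1 hpos2
        have hsA : pos A ⊆ PS Δ₂ := fun p hp =>
          pos_sub_PS hAB (by rw [pos_and]; exact Set.mem_union_left _ hp)
        have hsB : pos B ⊆ PS Δ₂ := fun p hp =>
          pos_sub_PS hAB (by rw [pos_and]; exact Set.mem_union_right _ hp)
        exact Set.union_subset (adj_mid' hpos1 (hsA.trans Set.subset_union_right))
          (adj_mid' hpos2 (hsB.trans Set.subset_union_right))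
      · rw [neg_and]
        simp only [NS_union, NS_singleton] at hneg1 hneg2
        have hsA : neg A ⊆ NS Δ₂ := fun p hp =>
          neg_sub_NS hAB (by rw [neg_and]; exact Set.mem_union_left _ hp)
        have hsB : neg B ⊆ NS Δ₂ := fun p hp =>
          neg_sub_NS hAB (by rw [neg_and]; exact Set.mem_union_right _ hp)
        exact Set.union_subset (adj_mid' hneg1 (hsA.trans Set.subset_union_right))
          (adj_mid' hneg2 (hsB.trans Set.subset_union_right))
  | OrL s dl dr ihl ihr =>
    intro h Γ₁ Γ₂ Δ₁ Δ₂ hr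
    simp only [root] at hr; subst hr
    obtain ⟨h1, h2, A, B, hAB, hdl, hrl, hdr, hrr⟩ := h
    have fΓ₁ := h1.subset Set.subset_union_left
    have fΓ₂ := h1.subset Set.subset_union_right
    have fΔ₁ := h2.subset Set.subset_union_left
    have fΔ₂ := h2.subset Set.subset_union_right
    rw [Set.mem_union] at hAB
    rcases hAB with hAB | hAB
    · obtain ⟨C1, hL1, hR1, hpos1, hneg1⟩ := ihl hdl ({A} ∪ Γ₁) Γ₂ Δ₁ Δ₂
        (by rw [hrl, Set.union_assoc])
      obtain ⟨C2, hL2, hR2, hpos2, hneg2⟩ := ihr hdr ({B} ∪ Γ₁) Γ₂ Δ₁ Δ₂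
        (by rw [hrr, Set.union_assoc])
      refine ⟨.Or C1 C2, ?_, ?_, ?_, ?_⟩
      · refine d_orL hAB ?_ ?_
        · refine d_orR (A := C1) (B := C2) (Set.mem_union_right _ rfl) ?_
          refine d_weaken hL1 subset_rfl ?_ ((Set.finite_singleton _).union fΓ₁)
            ((fΔ₁.union (Set.finite_singleton _)).union
              ((Set.finite_singleton _).insert _))
          intro x hx; simp only [Set.mem_union, Set.mem_insert_iff, Set.mem_singleton_iff] at hx ⊢; tauto
        · refine d_orR (A := C1) (B := C2) (Set.mem_union_right _ rfl) ?_
          refine d_weaken hL2 subset_rfl ?_ ((Set.finite_singleton _).union fΓ₁)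
            ((fΔ₁.union (Set.finite_singleton _)).union
              ((Set.finite_singleton _).insert _))
          intro x hx; simp only [Set.mem_union, Set.mem_insert_iff, Set.mem_singleton_iff] at hx ⊢; tauto
      · refine d_orL (A := C1) (B := C2) (Set.mem_union_left _ rfl) ?_ ?_
        · refine d_weaken hR1 ?_ subset_rfl
            ((Set.finite_singleton _).union ((Set.finite_singleton _).union fΓ₂)) fΔ₂
          intro x hx; simp only [Set.mem_union, Set.mem_insert_iff, Set.mem_singleton_iff] at hx ⊢; tauto
        · refine d_weaken hR2 ?_ subset_rfl
            ((Set.finite_singleton _).union ((Set.finite_singleton _).union fΓ₂)) fΔ₂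
          intro x hx; simp only [Set.mem_union, Set.mem_insert_iff, Set.mem_singleton_iff] at hx ⊢; tauto
      · rw [pos_or]
        simp only [PS_union, PS_singleton] at hpos1 hpos2
        have hsA : pos A ⊆ PS Γ₁ := fun p hp =>
          pos_sub_PS hAB (by rw [pos_or]; exact Set.mem_union_left _ hp)
        have hsB : pos B ⊆ PS Γ₁ := fun p hp =>
          pos_sub_PS hAB (by rw [pos_or]; exact Set.mem_union_right _ hp)
        exact Set.union_subset (adj_left hpos1 (hsA.trans Set.subset_union_left))
          (adj_left hpos2 (hsB.trans Set.subset_union_left))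
      · rw [neg_or]
        simp only [NS_union, NS_singleton] at hneg1 hneg2
        have hsA : neg A ⊆ NS Γ₁ := fun p hp =>
          neg_sub_NS hAB (by rw [neg_or]; exact Set.mem_union_left _ hp)
        have hsB : neg B ⊆ NS Γ₁ := fun p hp =>
          neg_sub_NS hAB (by rw [neg_or]; exact Set.mem_union_right _ hp)
        exact Set.union_subset (adj_left hneg1 (hsA.trans Set.subset_union_left))
          (adj_left hneg2 (hsB.trans Set.subset_union_left))
    · obtain ⟨C1, hL1, hR1, hpos1, hneg1⟩ := ihl hdl Γ₁ ({A} ∪ Γ₂) Δ₁ Δ₂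
        (by rw [hrl, Set.union_left_comm])
      obtain ⟨C2, hL2, hR2, hpos2, hneg2⟩ := ihr hdr Γ₁ ({B} ∪ Γ₂) Δ₁ Δ₂
        (by rw [hrr, Set.union_left_comm])
      refine ⟨.And C1 C2, ?_, ?_, ?_, ?_⟩
      · refine d_andR (A := C1) (B := C2) (Set.mem_union_right _ rfl) ?_ ?_
        · refine d_weaken hL1 subset_rfl ?_ fΓ₁
            ((fΔ₁.union (Set.finite_singleton _)).union (Set.finite_singleton _))
          intro x hx; simp only [Set.mem_union, Set.mem_insert_iff, Set.mem_singleton_iff] at hx ⊢; tauto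
        · refine d_weaken hL2 subset_rfl ?_ fΓ₁
            ((fΔ₁.union (Set.finite_singleton _)).union (Set.finite_singleton _))
          intro x hx; simp only [Set.mem_union, Set.mem_insert_iff, Set.mem_singleton_iff] at hx ⊢; tauto
      · refine d_orL (Set.mem_union_right _ hAB) ?_ ?_
        · refine d_andL (A := C1) (B := C2)
            (Set.mem_union_right _ (Set.mem_union_left _ rfl)) ?_
          refine d_weaken hR1 ?_ subset_rfl
            (((Set.finite_singleton _).insert _).union
              ((Set.finite_singleton _).union ((Set.finite_singleton _).union fΓ₂))) fΔ₂
          intro x hx; simp only [Set.mem_union, Set.mem_insert_iff, Set.mem_singleton_iff] at hx ⊢; tauto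
        · refine d_andL (A := C1) (B := C2)
            (Set.mem_union_right _ (Set.mem_union_left _ rfl)) ?_
          refine d_weaken hR2 ?_ subset_rfl
            (((Set.finite_singleton _).insert _).union
              ((Set.finite_singleton _).union ((Set.finite_singleton _).union fΓ₂))) fΔ₂
          intro x hx; simp only [Set.mem_union, Set.mem_insert_iff, Set.mem_singleton_iff] at hx ⊢; tauto
      · rw [pos_and]
        simp only [NS_union, NS_singleton] at hpos1 hpos2
        have hsA : neg A ⊆ NS Γ₂ := fun p hp =>
          neg_sub_NS hAB (by rw [neg_or]; exact Set.mem_union_left _ hp)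
        have hsB : neg B ⊆ NS Γ₂ := fun p hp =>
          neg_sub_NS hAB (by rw [neg_or]; exact Set.mem_union_right _ hp)
        exact Set.union_subset (adj_left' hpos1 (hsA.trans Set.subset_union_left))
          (adj_left' hpos2 (hsB.trans Set.subset_union_left))
      · rw [neg_and]
        simp only [PS_union, PS_singleton] at hneg1 hneg2
        have hsA : pos A ⊆ PS Γ₂ := fun p hp =>
          pos_sub_PS hAB (by rw [pos_or]; exact Set.mem_union_left _ hp)
        have hsB : pos B ⊆ PS Γ₂ := fun p hp =>
          pos_sub_PS hAB (by rw [pos_or]; exact Set.mem_union_right _ hp)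
        exact Set.union_subset (adj_left' hneg1 (hsA.trans Set.subset_union_left))
          (adj_left' hneg2 (hsB.trans Set.subset_union_left))
  | OrR s d ih =>
    intro h Γ₁ Γ₂ Δ₁ Δ₂ hr
    simp only [root] at hr; subst hr
    obtain ⟨h1, h2, A, B, hAB, hd, hrd⟩ := h
    have fΓ₁ := h1.subset Set.subset_union_left
    have fΓ₂ := h1.subset Set.subset_union_right
    have fΔ₁ := h2.subset Set.subset_union_left
    have fΔ₂ := h2.subset Set.subset_union_right
    rw [Set.mem_union] at hAB
    rcases hAB with hAB | hAB
    · obtain ⟨C, hL, hR, hpos, hneg⟩ := ih hd Γ₁ Γ₂ (Δ₁ ∪ {A, B}) Δ₂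
        (by rw [hrd, Set.union_right_comm])
      refine ⟨C, ?_, hR, ?_, ?_⟩
      · refine d_orR (Set.mem_union_left _ hAB) ?_
        refine d_weaken hL subset_rfl ?_ fΓ₁
          ((fΔ₁.union (Set.finite_singleton _)).union
            ((Set.finite_singleton _).insert _))
        intro x hx; simp only [Set.mem_union, Set.mem_insert_iff, Set.mem_singleton_iff] at hx ⊢; tauto
      · simp only [NS_union, NS_pair] at hpos
        refine adj_mid hpos ?_
        have hs : neg (form.Or A B) ⊆ NS Δ₁ := neg_sub_NS hAB
        rw [neg_or] at hs
        exact hs.trans Set.subset_union_right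
      · simp only [PS_union, PS_pair] at hneg
        refine adj_mid hneg ?_
        have hs : pos (form.Or A B) ⊆ PS Δ₁ := pos_sub_PS hAB
        rw [pos_or] at hs
        exact hs.trans Set.subset_union_right
    · obtain ⟨C, hL, hR, hpos, hneg⟩ := ih hd Γ₁ Γ₂ Δ₁ (Δ₂ ∪ {A, B})
        (by rw [hrd, Set.union_assoc])
      refine ⟨C, hL, d_orR hAB hR, ?_, ?_⟩
      · simp only [PS_union, PS_pair] at hpos
        refine adj_mid' hpos ?_
        have hs : pos (form.Or A B) ⊆ PS Δ₂ := pos_sub_PS hAB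
        rw [pos_or] at hs
        exact hs.trans Set.subset_union_right
      · simp only [NS_union, NS_pair] at hneg
        refine adj_mid' hneg ?_
        have hs : neg (form.Or A B) ⊆ NS Δ₂ := neg_sub_NS hAB
        rw [neg_or] at hs
        exact hs.trans Set.subset_union_right
  | NotL s d ih =>
    intro h Γ₁ Γ₂ Δ₁ Δ₂ hr
    simp only [root] at hr; subst hr
    obtain ⟨h1, h2, A, hN, hd, hrd⟩ := h
    have fΓ₁ := h1.subset Set.subset_union_left
    have fΓ₂ := h1.subset Set.subset_union_right
    have fΔ₁ := h2.subset Set.subset_union_left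
    have fΔ₂ := h2.subset Set.subset_union_right
    rw [Set.mem_union] at hN
    rcases hN with hN | hN
    · obtain ⟨C, hL, hR, hpos, hneg⟩ := ih hd Γ₁ Γ₂ (Δ₁ ∪ {A}) Δ₂
        (by rw [hrd, Set.union_right_comm])
      refine ⟨C, ?_, hR, ?_, ?_⟩
      · refine d_notL hN ?_
        refine d_weaken hL subset_rfl ?_ fΓ₁
          ((fΔ₁.union (Set.finite_singleton _)).union (Set.finite_singleton _))
        intro x hx; simp only [Set.mem_union, Set.mem_insert_iff, Set.mem_singleton_iff] at hx ⊢; tauto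
      · simp only [NS_union, NS_singleton] at hpos
        refine adj_mid hpos ?_
        have hs : pos (form.Not A) ⊆ PS Γ₁ := pos_sub_PS hN
        rw [pos_not] at hs
        exact hs.trans Set.subset_union_left
      · simp only [PS_union, PS_singleton] at hneg
        refine adj_mid hneg ?_
        have hs : neg (form.Not A) ⊆ NS Γ₁ := neg_sub_NS hN
        rw [neg_not] at hs
        exact hs.trans Set.subset_union_left
    · obtain ⟨C, hL, hR, hpos, hneg⟩ := ih hd Γ₁ Γ₂ Δ₁ (Δ₂ ∪ {A})
        (by rw [hrd, Set.union_assoc])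
      refine ⟨C, hL, d_notL (Set.mem_union_right _ hN) hR, ?_, ?_⟩
      · simp only [PS_union, PS_singleton] at hpos
        refine adj_mid' hpos ?_
        have hs : neg (form.Not A) ⊆ NS Γ₂ := neg_sub_NS hN
        rw [neg_not] at hs
        exact hs.trans Set.subset_union_left
      · simp only [NS_union, NS_singleton] at hneg
        refine adj_mid' hneg ?_
        have hs : pos (form.Not A) ⊆ PS Γ₂ := pos_sub_PS hN
        rw [pos_not] at hs
        exact hs.trans Set.subset_union_left
  | NotR s d ih =>
    intro h Γ₁ Γ₂ Δ₁ Δ₂ hr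
    simp only [root] at hr; subst hr
    obtain ⟨h1, h2, A, hN, hd, hrd⟩ := h
    have fΓ₁ := h1.subset Set.subset_union_left
    have fΓ₂ := h1.subset Set.subset_union_right
    have fΔ₁ := h2.subset Set.subset_union_left
    have fΔ₂ := h2.subset Set.subset_union_right
    rw [Set.mem_union] at hN
    rcases hN with hN | hN
    · obtain ⟨C, hL, hR, hpos, hneg⟩ := ih hd ({A} ∪ Γ₁) Γ₂ Δ₁ Δ₂
        (by rw [hrd, Set.union_assoc])
      refine ⟨C, d_notR (Set.mem_union_left _ hN) hL, hR, ?_, ?_⟩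
      · simp only [PS_union, PS_singleton] at hpos
        refine adj_left hpos ?_
        have hs : neg (form.Not A) ⊆ NS Δ₁ := neg_sub_NS hN
        rw [neg_not] at hs
        exact hs.trans Set.subset_union_right
      · simp only [NS_union, NS_singleton] at hneg
        refine adj_left hneg ?_
        have hs : pos (form.Not A) ⊆ PS Δ₁ := pos_sub_PS hN
        rw [pos_not] at hs
        exact hs.trans Set.subset_union_right
    · obtain ⟨C, hL, hR, hpos, hneg⟩ := ih hd Γ₁ ({A} ∪ Γ₂) Δ₁ Δ₂
        (by rw [hrd, Set.union_left_comm])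
      refine ⟨C, hL, ?_, ?_, ?_⟩
      · refine d_notR hN ?_
        refine d_weaken hR ?_ subset_rfl
          ((Set.finite_singleton _).union ((Set.finite_singleton _).union fΓ₂)) fΔ₂
        intro x hx; simp only [Set.mem_union, Set.mem_insert_iff, Set.mem_singleton_iff] at hx ⊢; tauto
      · simp only [NS_union, NS_singleton] at hpos
        refine adj_left' hpos ?_
        have hs : pos (form.Not A) ⊆ PS Δ₂ := pos_sub_PS hN
        rw [pos_not] at hs
        exact hs.trans Set.subset_union_right
      · simp only [PS_union, PS_singleton] at hneg
        refine adj_left' hneg ?_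
        have hs : neg (form.Not A) ⊆ NS Δ₂ := neg_sub_NS hN
        rw [neg_not] at hs
        exact hs.trans Set.subset_union_right
  | AllL s d ih =>
    intro h Γ₁ Γ₂ Δ₁ Δ₂ hr
    simp only [root] at hr; subst hr
    obtain ⟨h1, h2, A, a, t, hQ, hd, hrd⟩ := h
    have fΓ₁ := h1.subset Set.subset_union_left
    have fΓ₂ := h1.subset Set.subset_union_right
    have fΔ₁ := h2.subset Set.subset_union_left
    have fΔ₂ := h2.subset Set.subset_union_right
    rw [Set.mem_union] at hQ
    rcases hQ with hQ | hQ
    · obtain ⟨C, hL, hR, hpos, hneg⟩ := ih hd ({FAll_inst t (fAll a A)} ∪ Γ₁) Γ₂ Δ₁ Δ₂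
        (by rw [hrd, Set.union_assoc])
      refine ⟨C, d_allL t hQ hL, hR, ?_, ?_⟩
      · simp only [PS_union, PS_singleton] at hpos
        refine adj_left hpos ?_
        have hs : pos (FAll_inst t (fAll a A)) ⊆ PS Γ₁ := by
          rw [pos_FAll_inst]; exact pos_sub_PS hQ
        exact hs.trans Set.subset_union_left
      · simp only [NS_union, NS_singleton] at hneg
        refine adj_left hneg ?_
        have hs : neg (FAll_inst t (fAll a A)) ⊆ NS Γ₁ := by
          rw [neg_FAll_inst]; exact neg_sub_NS hQ
        exact hs.trans Set.subset_union_left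
    · obtain ⟨C, hL, hR, hpos, hneg⟩ := ih hd Γ₁ ({FAll_inst t (fAll a A)} ∪ Γ₂) Δ₁ Δ₂
        (by rw [hrd, Set.union_left_comm])
      refine ⟨C, hL, ?_, ?_, ?_⟩
      · refine d_allL t (Set.mem_union_right _ hQ) ?_
        refine d_weaken hR ?_ subset_rfl
          ((Set.finite_singleton _).union ((Set.finite_singleton _).union fΓ₂)) fΔ₂
        intro x hx; simp only [Set.mem_union, Set.mem_insert_iff, Set.mem_singleton_iff] at hx ⊢; tauto
      · simp only [NS_union, NS_singleton] at hpos
        refine adj_left' hpos ?_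
        have hs : neg (FAll_inst t (fAll a A)) ⊆ NS Γ₂ := by
          rw [neg_FAll_inst]; exact neg_sub_NS hQ
        exact hs.trans Set.subset_union_left
      · simp only [PS_union, PS_singleton] at hneg
        refine adj_left' hneg ?_
        have hs : pos (FAll_inst t (fAll a A)) ⊆ PS Γ₂ := by
          rw [pos_FAll_inst]; exact pos_sub_PS hQ
        exact hs.trans Set.subset_union_left
  | ExR s d ih =>
    intro h Γ₁ Γ₂ Δ₁ Δ₂ hr
    simp only [root] at hr; subst hr
    obtain ⟨h1, h2, A, a, t, hQ, hd, hrd⟩ := h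
    have fΓ₁ := h1.subset Set.subset_union_left
    have fΓ₂ := h1.subset Set.subset_union_right
    have fΔ₁ := h2.subset Set.subset_union_left
    have fΔ₂ := h2.subset Set.subset_union_right
    rw [Set.mem_union] at hQ
    rcases hQ with hQ | hQ
    · obtain ⟨C, hL, hR, hpos, hneg⟩ := ih hd Γ₁ Γ₂ (Δ₁ ∪ {FEx_inst t (fEx a A)}) Δ₂
        (by rw [hrd, Set.union_right_comm])
      refine ⟨C, ?_, hR, ?_, ?_⟩
      · refine d_exR t (Set.mem_union_left _ hQ) ?_
        refine d_weaken hL subset_rfl ?_ fΓ₁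
          ((fΔ₁.union (Set.finite_singleton _)).union (Set.finite_singleton _))
        intro x hx; simp only [Set.mem_union, Set.mem_insert_iff, Set.mem_singleton_iff] at hx ⊢; tauto
      · simp only [NS_union, NS_singleton] at hpos
        refine adj_mid hpos ?_
        have hs : neg (FEx_inst t (fEx a A)) ⊆ NS Δ₁ := by
          rw [neg_FEx_inst]; exact neg_sub_NS hQ
        exact hs.trans Set.subset_union_right
      · simp only [PS_union, PS_singleton] at hneg
        refine adj_mid hneg ?_
        have hs : pos (FEx_inst t (fEx a A)) ⊆ PS Δ₁ := by
          rw [pos_FEx_inst]; exact pos_sub_PS hQ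
        exact hs.trans Set.subset_union_right
    · obtain ⟨C, hL, hR, hpos, hneg⟩ := ih hd Γ₁ Γ₂ Δ₁ (Δ₂ ∪ {FEx_inst t (fEx a A)})
        (by rw [hrd, Set.union_assoc])
      refine ⟨C, hL, d_exR t hQ hR, ?_, ?_⟩
      · simp only [PS_union, PS_singleton] at hpos
        refine adj_mid' hpos ?_
        have hs : pos (FEx_inst t (fEx a A)) ⊆ PS Δ₂ := by
          rw [pos_FEx_inst]; exact pos_sub_PS hQ
        exact hs.trans Set.subset_union_right
      · simp only [NS_union, NS_singleton] at hneg
        refine adj_mid' hneg ?_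
        have hs : neg (FEx_inst t (fEx a A)) ⊆ NS Δ₂ := by
          rw [neg_FEx_inst]; exact neg_sub_NS hQ
        exact hs.trans Set.subset_union_right
  | AllR s d ih =>
    intro h Γ₁ Γ₂ Δ₁ Δ₂ hr
    simp only [root] at hr; subst hr
    obtain ⟨h1, h2, a, A, hQ, hfv, hd, hrd⟩ := h
    have fΓ₁ := h1.subset Set.subset_union_left
    have fΓ₂ := h1.subset Set.subset_union_right
    have fΔ₁ := h2.subset Set.subset_union_left
    have fΔ₂ := h2.subset Set.subset_union_right
    have hfvs : a ∉ fvs Γ₁ ∧ a ∉ fvs Γ₂ ∧ a ∉ fvs Δ₁ ∧ a ∉ fvs Δ₂ := by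
      simp only [fvs_union, Set.mem_union] at hfv
      push_neg at hfv
      exact ⟨hfv.1.1, hfv.1.2, hfv.2.1, hfv.2.2⟩
    rw [Set.mem_union] at hQ
    rcases hQ with hQ | hQ
    · obtain ⟨C, hL, hR, hpos, hneg⟩ := ih hd Γ₁ Γ₂ (Δ₁ ∪ {A}) Δ₂
        (by rw [hrd, Set.union_right_comm])
      refine ⟨fEx a C, ?_, ?_, ?_, ?_⟩
      · refine d_allR (A := A) (a := a) (Set.mem_union_left _ hQ) ?_ ?_
        · simp only [fvs_union, fvs_singleton, Set.mem_union, Set.mem_setOf_eq]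
          push_neg
          exact ⟨hfvs.1, hfvs.2.2.1, not_mem_fv_fEx a C⟩
        · refine d_exR (A := C) (a := a) a
            (Set.mem_union_left _ (Set.mem_union_right _ rfl)) ?_
          rw [FEx_inst_fEx]
          refine d_weaken hL subset_rfl ?_ fΓ₁
            (((fΔ₁.union (Set.finite_singleton _)).union (Set.finite_singleton _)).union
              (Set.finite_singleton _))
          intro x hx; simp only [Set.mem_union, Set.mem_insert_iff, Set.mem_singleton_iff] at hx ⊢; tauto
      · refine d_exL (A := C) (a := a) (Set.mem_union_left _ rfl) ?_ ?_
        · simp only [fvs_union, fvs_singleton, Set.mem_union, Set.mem_setOf_eq]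
          push_neg
          exact ⟨⟨not_mem_fv_fEx a C, hfvs.2.1⟩, hfvs.2.2.2⟩
        · refine d_weaken hR ?_ subset_rfl
            ((Set.finite_singleton _).union ((Set.finite_singleton _).union fΓ₂)) fΔ₂
          intro x hx; simp only [Set.mem_union, Set.mem_insert_iff, Set.mem_singleton_iff] at hx ⊢; tauto
      · rw [pos_fEx]
        simp only [NS_union, NS_singleton] at hpos
        refine adj_mid hpos ?_
        have hs : neg (fAll a A) ⊆ NS Δ₁ := neg_sub_NS hQ
        rw [neg_fAll] at hs
        exact hs.trans Set.subset_union_right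
      · rw [neg_fEx]
        simp only [PS_union, PS_singleton] at hneg
        refine adj_mid hneg ?_
        have hs : pos (fAll a A) ⊆ PS Δ₁ := pos_sub_PS hQ
        rw [pos_fAll] at hs
        exact hs.trans Set.subset_union_right
    · obtain ⟨C, hL, hR, hpos, hneg⟩ := ih hd Γ₁ Γ₂ Δ₁ (Δ₂ ∪ {A})
        (by rw [hrd, Set.union_assoc])
      refine ⟨fAll a C, ?_, ?_, ?_, ?_⟩
      · refine d_allR (A := C) (a := a) (Set.mem_union_right _ rfl) ?_ ?_
        · simp only [fvs_union, fvs_singleton, Set.mem_union, Set.mem_setOf_eq]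
          push_neg
          exact ⟨hfvs.1, hfvs.2.2.1, not_mem_fv_fAll a C⟩
        · refine d_weaken hL subset_rfl ?_ fΓ₁
            ((fΔ₁.union (Set.finite_singleton _)).union (Set.finite_singleton _))
          intro x hx; simp only [Set.mem_union, Set.mem_insert_iff, Set.mem_singleton_iff] at hx ⊢; tauto
      · refine d_allR (A := A) (a := a) hQ ?_ ?_
        · simp only [fvs_union, fvs_singleton, Set.mem_union, Set.mem_setOf_eq]
          push_neg
          exact ⟨⟨not_mem_fv_fAll a C, hfvs.2.1⟩, hfvs.2.2.2⟩
        · refine d_allL (A := C) (a := a) a (Set.mem_union_left _ rfl) ?_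
          rw [FAll_inst_fAll]
          refine d_weaken hR ?_ subset_rfl
            ((Set.finite_singleton _).union ((Set.finite_singleton _).union fΓ₂))
            (fΔ₂.union (Set.finite_singleton _))
          intro x hx; simp only [Set.mem_union, Set.mem_insert_iff, Set.mem_singleton_iff] at hx ⊢; tauto
      · rw [pos_fAll]
        simp only [PS_union, PS_singleton] at hpos
        refine adj_mid' hpos ?_
        have hs : pos (fAll a A) ⊆ PS Δ₂ := pos_sub_PS hQ
        rw [pos_fAll] at hs
        exact hs.trans Set.subset_union_right
      · rw [neg_fAll]
        simp only [NS_union, NS_singleton] at hneg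
        refine adj_mid' hneg ?_
        have hs : neg (fAll a A) ⊆ NS Δ₂ := neg_sub_NS hQ
        rw [neg_fAll] at hs
        exact hs.trans Set.subset_union_right
  | ExL s d ih =>
    intro h Γ₁ Γ₂ Δ₁ Δ₂ hr
    simp only [root] at hr; subst hr
    obtain ⟨h1, h2, a, A, hQ, hfv, hd, hrd⟩ := h
    have fΓ₁ := h1.subset Set.subset_union_left
    have fΓ₂ := h1.subset Set.subset_union_right
    have fΔ₁ := h2.subset Set.subset_union_left
    have fΔ₂ := h2.subset Set.subset_union_right
    have hfvs : a ∉ fvs Γ₁ ∧ a ∉ fvs Γ₂ ∧ a ∉ fvs Δ₁ ∧ a ∉ fvs Δ₂ := by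
      simp only [fvs_union, Set.mem_union] at hfv
      push_neg at hfv
      exact ⟨hfv.1.1, hfv.1.2, hfv.2.1, hfv.2.2⟩
    rw [Set.mem_union] at hQ
    rcases hQ with hQ | hQ
    · obtain ⟨C, hL, hR, hpos, hneg⟩ := ih hd ({A} ∪ Γ₁) Γ₂ Δ₁ Δ₂
        (by rw [hrd, Set.union_assoc])
      refine ⟨fEx a C, ?_, ?_, ?_, ?_⟩
      · refine d_exL (A := A) (a := a) hQ ?_ ?_
        · simp only [fvs_union, fvs_singleton, Set.mem_union, Set.mem_setOf_eq]
          push_neg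
          exact ⟨hfvs.1, hfvs.2.2.1, not_mem_fv_fEx a C⟩
        · refine d_exR (A := C) (a := a) a (Set.mem_union_right _ rfl) ?_
          rw [FEx_inst_fEx]
          refine d_weaken hL subset_rfl ?_ ((Set.finite_singleton _).union fΓ₁)
            ((fΔ₁.union (Set.finite_singleton _)).union (Set.finite_singleton _))
          intro x hx; simp only [Set.mem_union, Set.mem_insert_iff, Set.mem_singleton_iff] at hx ⊢; tauto
      · refine d_exL (A := C) (a := a) (Set.mem_union_left _ rfl) ?_ ?_
        · simp only [fvs_union, fvs_singleton, Set.mem_union, Set.mem_setOf_eq]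
          push_neg
          exact ⟨⟨not_mem_fv_fEx a C, hfvs.2.1⟩, hfvs.2.2.2⟩
        · refine d_weaken hR ?_ subset_rfl
            ((Set.finite_singleton _).union ((Set.finite_singleton _).union fΓ₂)) fΔ₂
          intro x hx; simp only [Set.mem_union, Set.mem_insert_iff, Set.mem_singleton_iff] at hx ⊢; tauto
      · rw [pos_fEx]
        simp only [PS_union, PS_singleton] at hpos
        refine adj_left hpos ?_
        have hs : pos (fEx a A) ⊆ PS Γ₁ := pos_sub_PS hQ
        rw [pos_fEx] at hs
        exact hs.trans Set.subset_union_left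
      · rw [neg_fEx]
        simp only [NS_union, NS_singleton] at hneg
        refine adj_left hneg ?_
        have hs : neg (fEx a A) ⊆ NS Γ₁ := neg_sub_NS hQ
        rw [neg_fEx] at hs
        exact hs.trans Set.subset_union_left
    · obtain ⟨C, hL, hR, hpos, hneg⟩ := ih hd Γ₁ ({A} ∪ Γ₂) Δ₁ Δ₂
        (by rw [hrd, Set.union_left_comm])
      refine ⟨fAll a C, ?_, ?_, ?_, ?_⟩
      · refine d_allR (A := C) (a := a) (Set.mem_union_right _ rfl) ?_ ?_
        · simp only [fvs_union, fvs_singleton, Set.mem_union, Set.mem_setOf_eq]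
          push_neg
          exact ⟨hfvs.1, hfvs.2.2.1, not_mem_fv_fAll a C⟩
        · refine d_weaken hL subset_rfl ?_ fΓ₁
            ((fΔ₁.union (Set.finite_singleton _)).union (Set.finite_singleton _))
          intro x hx; simp only [Set.mem_union, Set.mem_insert_iff, Set.mem_singleton_iff] at hx ⊢; tauto
      · refine d_exL (A := A) (a := a) (Set.mem_union_right _ hQ) ?_ ?_
        · simp only [fvs_union, fvs_singleton, Set.mem_union, Set.mem_setOf_eq]
          push_neg
          exact ⟨⟨not_mem_fv_fAll a C, hfvs.2.1⟩, hfvs.2.2.2⟩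
        · refine d_allL (A := C) (a := a) a
            (Set.mem_union_right _ (Set.mem_union_left _ rfl)) ?_
          rw [FAll_inst_fAll]
          refine d_weaken hR ?_ subset_rfl
            ((Set.finite_singleton _).union ((Set.finite_singleton _).union
              ((Set.finite_singleton _).union fΓ₂))) fΔ₂
          intro x hx; simp only [Set.mem_union, Set.mem_insert_iff, Set.mem_singleton_iff] at hx ⊢; tauto
      · rw [pos_fAll]
        simp only [NS_union, NS_singleton] at hpos
        refine adj_left' hpos ?_
        have hs : neg (fEx a A) ⊆ NS Γ₂ := neg_sub_NS hQ
        rw [neg_fEx] at hs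
        exact hs.trans Set.subset_union_left
      · rw [neg_fAll]
        simp only [PS_union, PS_singleton] at hneg
        refine adj_left' hneg ?_
        have hs : pos (fEx a A) ⊆ PS Γ₂ := pos_sub_PS hQ
        rw [pos_fEx] at hs
        exact hs.trans Set.subset_union_left
  | WL s d ih =>
    intro h Γ₁ Γ₂ Δ₁ Δ₂ hr
    obtain ⟨Γ, Δ, A, f1, f2, hd, hrd, hs⟩ := h
    simp only [root] at hr
    rw [hs] at hr
    have e1 : {A} ∪ Γ = Γ₁ ∪ Γ₂ := congrArg Prod.fst hr
    have e2 : Δ = Δ₁ ∪ Δ₂ := congrArg Prod.snd hr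
    have fΓΓ : (Γ₁ ∪ Γ₂).Finite := by rw [← e1]; exact (Set.finite_singleton A).union f1
    have fΓ₁ := fΓΓ.subset Set.subset_union_left
    have fΓ₂ := fΓΓ.subset Set.subset_union_right
    have fΔ₁ : Δ₁.Finite := (e2 ▸ f2).subset Set.subset_union_left
    have fΔ₂ : Δ₂.Finite := (e2 ▸ f2).subset Set.subset_union_right
    have hsub : Γ ⊆ Γ₁ ∪ Γ₂ := by rw [← e1]; exact Set.subset_union_right
    obtain ⟨C, hL, hR, hpos, hneg⟩ := ih hd (Γ ∩ Γ₁) (Γ ∩ Γ₂) Δ₁ Δ₂ (by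
      rw [hrd, e2]
      congr 1
      rw [← Set.inter_union_distrib_left]
      exact (Set.inter_eq_self_of_subset_left hsub).symm)
    refine ⟨C, ?_, ?_, ?_, ?_⟩
    · exact d_weaken hL Set.inter_subset_right subset_rfl fΓ₁
        (fΔ₁.union (Set.finite_singleton _))
    · refine d_weaken hR ?_ subset_rfl ((Set.finite_singleton _).union fΓ₂) fΔ₂
      exact Set.union_subset_union_right _ Set.inter_subset_right
    · exact hpos.trans (Set.inter_subset_inter
        (Set.union_subset_union_left _ (PS_mono Set.inter_subset_right))
        (Set.union_subset_union_left _ (NS_mono Set.inter_subset_right)))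
    · exact hneg.trans (Set.inter_subset_inter
        (Set.union_subset_union_left _ (NS_mono Set.inter_subset_right))
        (Set.union_subset_union_left _ (PS_mono Set.inter_subset_right)))
  | WR s d ih =>
    intro h Γ₁ Γ₂ Δ₁ Δ₂ hr
    obtain ⟨Γ, Δ, A, f1, f2, hd, hrd, hs⟩ := h
    simp only [root] at hr
    rw [hs] at hr
    have e1 : Γ = Γ₁ ∪ Γ₂ := congrArg Prod.fst hr
    have e2 : Δ ∪ {A} = Δ₁ ∪ Δ₂ := congrArg Prod.snd hr
    have fΓ₁ : Γ₁.Finite := (e1 ▸ f1).subset Set.subset_union_left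
    have fΓ₂ : Γ₂.Finite := (e1 ▸ f1).subset Set.subset_union_right
    have fΔΔ : (Δ₁ ∪ Δ₂).Finite := by rw [← e2]; exact f2.union (Set.finite_singleton A)
    have fΔ₁ := fΔΔ.subset Set.subset_union_left
    have fΔ₂ := fΔΔ.subset Set.subset_union_right
    have hsub : Δ ⊆ Δ₁ ∪ Δ₂ := by rw [← e2]; exact Set.subset_union_left
    obtain ⟨C, hL, hR, hpos, hneg⟩ := ih hd Γ₁ Γ₂ (Δ ∩ Δ₁) (Δ ∩ Δ₂) (by
      rw [hrd, e1]
      congr 1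
      rw [← Set.inter_union_distrib_left]
      exact (Set.inter_eq_self_of_subset_left hsub).symm)
    refine ⟨C, ?_, ?_, ?_, ?_⟩
    · refine d_weaken hL subset_rfl ?_ fΓ₁ (fΔ₁.union (Set.finite_singleton _))
      exact Set.union_subset_union_left _ Set.inter_subset_right
    · exact d_weaken hR subset_rfl Set.inter_subset_right
        ((Set.finite_singleton _).union fΓ₂) fΔ₂
    · exact hpos.trans (Set.inter_subset_inter
        (Set.union_subset_union_right _ (NS_mono Set.inter_subset_right))
        (Set.union_subset_union_right _ (PS_mono Set.inter_subset_right)))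
    · exact hneg.trans (Set.inter_subset_inter
        (Set.union_subset_union_right _ (PS_mono Set.inter_subset_right))
        (Set.union_subset_union_right _ (NS_mono Set.inter_subset_right)))

theorem craig_interpolation (d : Deriv) (Γ Δ : Set form)
    (hd : is_deriv d) (hr : root d = (Γ, Δ)) :
    ∃ C : form,
      (∃ dl, is_deriv dl ∧ root dl = (Γ, {C})) ∧
      (∃ dr, is_deriv dr ∧ root dr = ({C}, Δ)) ∧
      pos C ⊆ (⋃ A ∈ Γ, pos A) ∩ (⋃ A ∈ Δ, pos A) ∧
      neg C ⊆ (⋃ A ∈ Γ, neg A) ∩ (⋃ A ∈ Δ, neg A) := by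
  obtain ⟨C, hL, hR, hpos, hneg⟩ := interpolate d hd Γ ∅ ∅ Δ (by rw [hr]; simp)
  rw [Set.empty_union] at hL
  rw [Set.union_empty] at hR
  simp only [PS_empty, NS_empty, Set.union_empty, Set.empty_union] at hpos hneg
  exact ⟨C, hL, hR, hpos, hneg⟩

end Craig
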